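/- arXiv:1607.01006 — 2 statements merged into one kernel-verified Lean document; each statement's English description precedes it below -/
import Mathlib

section
/- For every nonnegative integer m, ∑_{k=0}^{2m+1} (-2)^k C(2m+1,k) H_k = H_m - 2H_{2m+1}, where H_j is the j-th harmonic number. -/
open Finset

noncomputable def H (n : ℕ) : ℝ := ∑ i ∈ Finset.range n, (1:ℝ)/(i+1)

lemma Hsucc (k : ℕ) : H (k+1) = H k + 1/(k+1) := by
  simp [H, Finset.sum_range_succ]

lemma binsum (n : ℕ) : ∑ i ∈ range (n+2), ((n+1).choose i : ℝ) * (-2)^i = (-1)^(n+1) := by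
  have := add_pow (-2 : ℝ) 1 (n+1)
  simp only [one_pow, mul_one] at this
  rw [show ((-2:ℝ)+1) = -1 by norm_num] at this
  rw [this]
  exact Finset.sum_congr rfl (fun i _ => by ring)

lemma sumA (n : ℕ) : ∑ j ∈ range (n+1), (n.choose j : ℝ) * (-2)^j / (j+1)
    = (1 - (-1:ℝ)^(n+1)) / (2*(n+1)) := by
  have key : ∀ j : ℕ, (n.choose j : ℝ) / (j+1) = ((n+1).choose (j+1) : ℝ) / (n+1) := by
    intro j
    have h' : ((n+1 : ℕ) : ℝ) * (n.choose j : ℝ) = ((n+1).choose (j+1) : ℝ) * ((j+1 : ℕ) : ℝ) := by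
      exact_mod_cast congrArg (Nat.cast : ℕ → ℝ) (Nat.add_one_mul_choose_eq n j)
    push_cast at h'
    rw [div_eq_div_iff (by positivity) (by positivity)]
    linarith [h']
  have step : ∑ j ∈ range (n+1), (n.choose j : ℝ) * (-2)^j / (j+1)
      = (∑ j ∈ range (n+1), ((n+1).choose (j+1) : ℝ) * (-2)^j) / (n+1) := by
    rw [Finset.sum_div]
    refine Finset.sum_congr rfl (fun j _ => ?_)
    calc (n.choose j : ℝ) * (-2)^j / (j+1) = (-2)^j * ((n.choose j : ℝ)/(j+1)) := by ring
      _ = (-2)^j * (((n+1).choose (j+1) : ℝ)/(n+1)) := by rw [key j]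
      _ = ((n+1).choose (j+1) : ℝ) * (-2)^j / (n+1) := by ring
  rw [step]
  have shift : ∑ j ∈ range (n+1), ((n+1).choose (j+1) : ℝ) * (-2)^j
      = ((-1:ℝ)^(n+1) - 1) / (-2) := by
    have hb := binsum n
    rw [Finset.sum_range_succ'] at hb
    simp only [Nat.choose_zero_right, Nat.cast_one, pow_zero, one_mul, mul_one] at hb
    have : ∑ j ∈ range (n+1), ((n+1).choose (j+1) : ℝ) * (-2)^(j+1)
        = (-2) * ∑ j ∈ range (n+1), ((n+1).choose (j+1) : ℝ) * (-2)^j := by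
      rw [Finset.mul_sum]; exact Finset.sum_congr rfl (fun j _ => by ring)
    rw [this] at hb
    linarith [hb]
  rw [shift]
  have hn : ((n:ℝ)+1) ≠ 0 := by positivity
  field_simp
  ring

lemma recS (n : ℕ) : ∑ k ∈ range (n+2), (-2:ℝ)^k * ((n+1).choose k : ℝ) * H k
    = -(∑ k ∈ range (n+1), (-2:ℝ)^k * (n.choose k : ℝ) * H k)
      + ((-1:ℝ)^(n+1) - 1)/(n+1) := by
  rw [Finset.sum_range_succ']
  have h0 : (-2:ℝ)^0 * ((n+1).choose 0 : ℝ) * H 0 = 0 := by simp [H]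
  rw [h0, add_zero]
  have hterm : ∀ k ∈ range (n+1),
      (-2:ℝ)^(k+1) * ((n+1).choose (k+1) : ℝ) * H (k+1)
      = (-2) * ((-2:ℝ)^k * (n.choose k : ℝ) * H k)
        + (-2) * ((n.choose k : ℝ) * (-2)^k / (k+1))
        + (-2:ℝ)^(k+1) * (n.choose (k+1) : ℝ) * H (k+1) := by
    intro k _
    rw [Nat.choose_succ_succ]
    push_cast
    rw [Hsucc k]
    ring
  rw [Finset.sum_congr rfl hterm]
  rw [Finset.sum_add_distrib, Finset.sum_add_distrib, ← Finset.mul_sum, ← Finset.mul_sum]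
  have hshift : ∑ k ∈ range (n+1), (-2:ℝ)^(k+1) * (n.choose (k+1) : ℝ) * H (k+1)
      = ∑ k ∈ range (n+1), (-2:ℝ)^k * (n.choose k : ℝ) * H k := by
    have h1 := Finset.sum_range_succ' (fun k => (-2:ℝ)^k * (n.choose k : ℝ) * H k) (n+1)
    have h2 := Finset.sum_range_succ (fun k => (-2:ℝ)^k * (n.choose k : ℝ) * H k) (n+1)
    simp only [Nat.choose_succ_self, Nat.cast_zero, mul_zero, zero_mul, add_zero,
      Nat.choose_zero_right, Nat.cast_one, pow_zero, one_mul] at h1 h2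
    have h0' : H 0 = 0 := by simp [H]
    rw [h0', add_zero, h2] at h1
    linarith [h1]
  rw [hshift, sumA n]
  have hn : ((n:ℝ)+1) ≠ 0 := by positivity
  field_simp
  ring

theorem stmt1 (m : ℕ) :
    ∑ k ∈ Finset.range (2*m+2), (-2:ℝ)^k * ((2*m+1).choose k : ℝ) * H k
      = H m - 2 * H (2*m+1) := by
  induction m with
  | zero =>
      simp [Finset.sum_range_succ, H]
  | succ m ih =>
      have e1 : 2*(m+1)+2 = (2*m+2)+2 := by ring
      have e2 : 2*(m+1)+1 = (2*m+2)+1 := by ring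
      rw [e1, e2, recS (2*m+2)]
      have e3 : (2*m+2) = (2*m+1)+1 := by ring
      rw [show (2*m+2)+1 = (2*m+1)+2 by ring, e3]
      rw [recS (2*m+1)]
      rw [ih]
      have hodd : ((-1:ℝ))^(2*m+1+1+1) = -1 := by
        have : Odd (2*m+1+1+1) := ⟨m+1, by ring⟩
        exact this.neg_one_pow
      have heven : ((-1:ℝ))^(2*m+1+1) = 1 := by
        have : Even (2*m+1+1) := ⟨m+1, by ring⟩
        exact this.neg_one_pow
      rw [hodd, heven]
      have hH1 : H (m+1) = H m + 1/(m+1) := Hsucc m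
      have hH2 : H (2*m+1+2) = H (2*m+1) + 1/(2*m+2) + 1/(2*m+3) := by
        rw [show 2*m+1+2 = (2*m+2)+1 by ring, Hsucc (2*m+2),
          show 2*m+2 = (2*m+1)+1 by ring, Hsucc (2*m+1)]
        push_cast; ring
      rw [hH1, hH2]
      have h1 : ((m:ℝ)+1) ≠ 0 := by positivity
      have h2 : (2*(m:ℝ)+2) ≠ 0 := by positivity
      have h3 : (2*(m:ℝ)+3) ≠ 0 := by positivity
      push_cast
      field_simp
      ring
end

section
/- For all nonnegative integers m, ∑_{k=0}^{2m+1} (-2)^k C(2m+1,k) · k · H_k = 2(2m+1)(H_m - 2H_{2m+1}) + 2, where H_j is the j-th harmonic number. -/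
open Finset

lemma H_zero : H 0 = 0 := by simp [H]

lemma H_succ (n : ℕ) : H (n+1) = H n + 1/(n+1) := by
  simp [H, Finset.sum_range_succ]

lemma alt (n : ℕ) : ∑ k ∈ range (n+1), (-2:ℝ)^k * (n.choose k : ℝ) = (-1:ℝ)^n := by
  have := add_pow (-2 : ℝ) 1 n
  simp only [one_pow, mul_one] at this
  norm_num at this
  rw [← this]

lemma Ulem (n : ℕ) : ∑ j ∈ range (n+1), (-2:ℝ)^j * (n.choose j : ℝ)/(j+1)
    = ((-1:ℝ)^(n+1) - 1)/(-2*(n+1)) := by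
  rw [eq_div_iff (mul_ne_zero (by norm_num) (by positivity))]
  rw [Finset.sum_mul]
  have key : ∀ j ∈ range (n+1), (-2:ℝ)^j * (n.choose j : ℝ)/(j+1) * (-2*(n+1))
      = (-2:ℝ)^(j+1) * ((n+1).choose (j+1) : ℝ) := by
    intro j _
    have hc : ((n:ℝ)+1) * (n.choose j : ℝ) = ((n+1).choose (j+1) : ℝ) * ((j:ℝ)+1) := by
      exact_mod_cast congrArg (Nat.cast (R := ℝ)) (Nat.add_one_mul_choose_eq n j)
    have hj : ((j:ℝ)+1) ≠ 0 := by positivity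
    calc (-2:ℝ)^j * (n.choose j : ℝ)/(j+1) * (-2*(n+1))
        = (-2:ℝ)^(j+1) * (((n:ℝ)+1) * (n.choose j : ℝ)) / ((j:ℝ)+1) := by ring
      _ = (-2:ℝ)^(j+1) * (((n+1).choose (j+1) : ℝ) * ((j:ℝ)+1)) / ((j:ℝ)+1) := by rw [hc]
      _ = (-2:ℝ)^(j+1) * ((n+1).choose (j+1) : ℝ) := by field_simp
  rw [Finset.sum_congr rfl key]
  have h := alt (n+1)
  rw [Finset.sum_range_succ'] at h
  norm_num at h
  linarith [h]

noncomputable def T (n : ℕ) : ℝ := ∑ k ∈ range (n+1), (-2:ℝ)^k * (n.choose k : ℝ) * H k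

lemma Tshift (n : ℕ) :
    ∑ k ∈ range (n+1), (-2:ℝ)^(k+1) * (n.choose (k+1) : ℝ) * H (k+1) = T n := by
  have hext : ∑ k ∈ range (n+2), (-2:ℝ)^k * (n.choose k : ℝ) * H k = T n := by
    rw [Finset.sum_range_succ, Nat.choose_succ_self]
    simp [T]
  rw [← hext]
  conv_rhs => rw [Finset.sum_range_succ']
  simp [H_zero]

lemma Trec (n : ℕ) : T (n+1) = -T n + ((-1:ℝ)^(n+1) - 1)/(n+1) := by
  have expand : ∀ k ∈ range (n+1),
      (-2:ℝ)^(k+1) * ((n+1).choose (k+1) : ℝ) * H (k+1)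
      = (-2) * ((-2:ℝ)^k * (n.choose k : ℝ) * H k)
        + (-2) * ((-2:ℝ)^k * (n.choose k : ℝ)/(k+1))
        + (-2:ℝ)^(k+1) * (n.choose (k+1) : ℝ) * H (k+1) := by
    intro k _
    rw [Nat.choose_succ_succ, H_succ]
    push_cast
    ring
  have : T (n+1) = ∑ k ∈ range (n+1),
      (-2:ℝ)^(k+1) * ((n+1).choose (k+1) : ℝ) * H (k+1) := by
    rw [T, Finset.sum_range_succ']
    simp [H_zero]
  rw [this, Finset.sum_congr rfl expand]
  rw [Finset.sum_add_distrib, Finset.sum_add_distrib, ← Finset.mul_sum, ← Finset.mul_sum]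
  rw [Tshift, Ulem]
  rw [show (∑ k ∈ range (n+1), (-2:ℝ)^k * (n.choose k : ℝ) * H k) = T n from rfl]
  have hn : ((n:ℝ)+1) ≠ 0 := by positivity
  field_simp
  ring

lemma Teven (m : ℕ) : T (2*m) = 2 * H (2*m) - H m := by
  induction m with
  | zero => simp [T, H_zero]
  | succ m ih =>
    have h1 := Trec (2*m)
    have h2 := Trec (2*m+1)
    have e1 : (-1:ℝ)^(2*m+1) = -1 := by
      rw [pow_succ, pow_mul]; norm_num
    have e2 : (-1:ℝ)^(2*m+1+1) = 1 := by
      rw [pow_succ, e1]; norm_num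
    rw [e1] at h1; rw [e2] at h2
    have key : T (2*(m+1)) = T (2*m) + 2/(2*(m:ℝ)+1) := by
      have : 2*(m+1) = (2*m+1)+1 := by ring
      rw [this, h2, h1]
      push_cast
      have : (2*(m:ℝ)+1) ≠ 0 := by positivity
      field_simp
      ring
    rw [key, ih]
    have : 2*(m+1) = (2*m+1)+1 := by ring
    rw [this, H_succ, show 2*m+1 = (2*m)+1 from rfl, H_succ, H_succ]
    push_cast
    have h3 : (2*(m:ℝ)+1) ≠ 0 := by positivity
    have h4 : ((m:ℝ)+1) ≠ 0 := by positivity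
    field_simp
    ring

theorem stmt5 (m : ℕ) :
    ∑ k ∈ Finset.range (2*m+2), (-2:ℝ)^k * ((2*m+1).choose k : ℝ) * (k:ℝ) * H k
      = 2 * (2*(m:ℝ)+1) * (H m - 2 * H (2*m+1)) + 2 := by
  rw [Finset.sum_range_succ']
  have expand : ∀ k ∈ range (2*m+1),
      (-2:ℝ)^(k+1) * ((2*m+1).choose (k+1) : ℝ) * ((k:ℝ)+1) * H (k+1)
      = (-2)*(2*(m:ℝ)+1) * ((-2:ℝ)^k * ((2*m).choose k : ℝ) * H k)
        + (-2)*(2*(m:ℝ)+1) * ((-2:ℝ)^k * ((2*m).choose k : ℝ)/(k+1)) := by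
    intro k _
    have hc : (2*(m:ℝ)+1) * ((2*m).choose k : ℝ)
        = ((2*m+1).choose (k+1) : ℝ) * ((k:ℝ)+1) := by
      have := congrArg (Nat.cast (R := ℝ)) (Nat.add_one_mul_choose_eq (2*m) k)
      push_cast at this
      linarith [this]
    have hk : ((k:ℝ)+1) ≠ 0 := by positivity
    calc (-2:ℝ)^(k+1) * ((2*m+1).choose (k+1) : ℝ) * ((k:ℝ)+1) * H (k+1)
        = (-2:ℝ)^(k+1) * (((2*m+1).choose (k+1) : ℝ) * ((k:ℝ)+1)) * (H k + 1/((k:ℝ)+1)) := by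
          rw [H_succ]; ring
      _ = (-2:ℝ)^(k+1) * ((2*(m:ℝ)+1) * ((2*m).choose k : ℝ)) * (H k + 1/((k:ℝ)+1)) := by
          rw [hc]
      _ = (-2)*(2*(m:ℝ)+1) * ((-2:ℝ)^k * ((2*m).choose k : ℝ) * H k)
          + (-2)*(2*(m:ℝ)+1) * ((-2:ℝ)^k * ((2*m).choose k : ℝ)/(k+1)) := by
          field_simp; ring
  have cast1 : ∀ k ∈ range (2*m+1),
      (-2:ℝ)^(k+1) * ((2*m+1).choose (k+1) : ℝ) * ((k+1 : ℕ):ℝ) * H (k+1)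
      = (-2)*(2*(m:ℝ)+1) * ((-2:ℝ)^k * ((2*m).choose k : ℝ) * H k)
        + (-2)*(2*(m:ℝ)+1) * ((-2:ℝ)^k * ((2*m).choose k : ℝ)/(k+1)) := by
    intro k hk
    have := expand k hk
    push_cast
    push_cast at this
    exact this
  rw [Finset.sum_congr rfl cast1, Finset.sum_add_distrib, ← Finset.mul_sum, ← Finset.mul_sum]
  have hT : (∑ k ∈ range (2*m+1), (-2:ℝ)^k * ((2*m).choose k : ℝ) * H k) = T (2*m) := rfl
  rw [hT, Teven, Ulem (2*m)]
  have e1 : (-1:ℝ)^(2*m+1) = -1 := by rw [pow_succ, pow_mul]; norm_num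
  push_cast [e1]
  rw [show (2*m+1 : ℕ) = (2*m)+1 from rfl, H_succ]
  push_cast
  have h3 : (2*(m:ℝ)+1) ≠ 0 := by positivity
  field_simp
  ring
end
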